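/- The nuclear norm of the n×n lower triangular all-ones matrix Tₙ satisfies (1/n)·‖Tₙ‖_* = Ω(log n); in particular (1/n)‖Tₙ‖_* ≥ ((2n+1)/(πn))·Σ_{j=1}^{n} 1/(2j−1). -/

import Mathlib

open Matrix Real

/-- `‖B‖_{2→∞}`: the largest Euclidean norm of a row of `B`. -/
noncomputable def rowNorm {m n : Type*} [Fintype m] [Fintype n] (B : Matrix m n ℝ) : ℝ :=
  ⨆ i, Real.sqrt (∑ j, B i j ^ 2)

/-- `‖C‖_{1→2}`: the largest Euclidean norm of a column of `C`. -/
noncomputable def colNorm {m n : Type*} [Fintype m] [Fintype n] (C : Matrix m n ℝ) : ℝ :=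
  ⨆ j, Real.sqrt (∑ i, C i j ^ 2)

/-- The `γ₂` factorization norm of a real matrix. -/
noncomputable def gamma2 {m n : Type*} [Fintype m] [Fintype n] (A : Matrix m n ℝ) : ℝ :=
  sInf {t | ∃ (k : ℕ) (B : Matrix m (Fin k) ℝ) (C : Matrix (Fin k) n ℝ),
    A = B * C ∧ t = rowNorm B * colNorm C}

/-- `Tₙ`: the n×n lower triangular all-ones matrix. -/
def T (n : ℕ) : Matrix (Fin n) (Fin n) ℝ :=
  Matrix.of fun i j => if j ≤ i then 1 else 0

/-- The nuclear norm of a square real matrix. -/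
noncomputable def nuclearNorm {k : Type*} [Fintype k] [DecidableEq k]
    (B : Matrix k k ℝ) : ℝ :=
  ∑ i, Real.sqrt ((show (Bᵀ * B).IsHermitian by
    simpa [Matrix.conjTranspose_eq_transpose_of_trivial] using
      Matrix.isHermitian_conjTranspose_mul_self B).eigenvalues i)

section Aux
open Polynomial Finset

lemma sumcos (y : ℝ) (n : ℕ) :
    2 * Real.sin y * ∑ i ∈ range n, Real.cos ((2*i+1)*y) = Real.sin (2*n*y) := by
  induction n with
  | zero => simp
  | succ n ih =>
    rw [Finset.sum_range_succ, mul_add, ih]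
    have h : 2 * Real.sin y * Real.cos ((2*n+1)*y)
        = Real.sin ((2*n+1)*y + y) - Real.sin ((2*n+1)*y - y) := by
      rw [Real.sin_add, Real.sin_sub]; ring
    rw [h]
    have e1 : (2*n+1)*y + y = 2*(n+1)*y := by push_cast; ring
    have e2 : (2*n+1)*y - y = 2*n*y := by ring
    rw [e1, e2]; push_cast; ring

lemma sin_ne (n : ℕ) (m : ℤ) (hm : m ≠ 0) (hm2 : |m| < 2*n+1) :
    Real.sin (m * π / (2*n+1)) ≠ 0 := by
  have hpos : (0:ℝ) < 2*n+1 := by positivity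
  rcases lt_or_gt_of_ne hm with h | h
  · have : Real.sin (((-m) : ℤ) * π / (2*n+1)) > 0 := by
      apply Real.sin_pos_of_pos_of_lt_pi
      · have : (0:ℝ) < (-m : ℤ) := by exact_mod_cast Int.neg_pos.2 h
        positivity
      · rw [div_lt_iff₀ hpos]
        have hz : -m < 2*(n:ℤ)+1 := by
          have := (abs_lt.1 hm2).1; linarith
        have : ((-m : ℤ) : ℝ) < 2*n+1 := by exact_mod_cast hz
        nlinarith [Real.pi_pos]
    intro hc
    rw [show ((-m : ℤ) : ℝ) * π / (2*n+1) = -(m * π / (2*n+1)) by push_cast; ring,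
      Real.sin_neg, hc] at this
    simp at this
  · have : Real.sin (m * π / (2*n+1)) > 0 := by
      apply Real.sin_pos_of_pos_of_lt_pi
      · have : (0:ℝ) < (m : ℝ) := by exact_mod_cast h
        positivity
      · rw [div_lt_iff₀ hpos]
        have hz : m < 2*(n:ℤ)+1 := (abs_lt.1 hm2).2
        have : ((m : ℤ) : ℝ) < 2*n+1 := by exact_mod_cast hz
        nlinarith [Real.pi_pos]
    exact ne_of_gt this

lemma sumcos_closed (n : ℕ) (m : ℤ) (hs : Real.sin (m * π / (2*n+1)) ≠ 0) :
    ∑ i ∈ range n, Real.cos ((2*i+1) * (m * π / (2*n+1))) = -((-1:ℝ)^m) / 2 := by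
  set y : ℝ := m * π / (2*n+1) with hy
  have h21 : (2*(n:ℝ)+1) ≠ 0 := by positivity
  have key : 2*(n:ℝ)*y = m * π - y := by
    rw [hy]; field_simp; ring
  have := sumcos y n
  rw [key, Real.sin_int_mul_pi_sub] at this
  have h2 : Real.sin y ≠ 0 := hs
  have h3 : Real.sin y * (2 * ∑ i ∈ range n, Real.cos ((2*i+1) * y))
      = Real.sin y * (-(-1:ℝ)^m) := by linarith
  have h4 := mul_left_cancel₀ h2 h3
  linarith

noncomputable def xv (n j : ℕ) : ℝ := (2*j+1) * π / (2*(2*n+1))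

lemma orth (n j k : ℕ) (hj : j < n) (hk : k < n) :
    ∑ i ∈ range n, Real.cos ((2*i+1) * xv n j) * Real.cos ((2*i+1) * xv n k)
      = if j = k then (2*(n:ℝ)+1)/4 else 0 := by
  have hsplit : ∀ i : ℕ, Real.cos ((2*i+1) * xv n j) * Real.cos ((2*i+1) * xv n k)
      = (Real.cos ((2*i+1) * (((j+k+1 : ℤ) : ℝ) * π / (2*n+1)))
        + Real.cos ((2*i+1) * ((((j:ℤ)-k) : ℝ) * π / (2*n+1)))) / 2 := by
    intro i
    have e1 : (2*(i:ℝ)+1) * (((j+k+1 : ℤ) : ℝ) * π / (2*n+1)) = (2*i+1)*xv n j + (2*i+1)*xv n k := by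
      unfold xv; push_cast; field_simp; ring
    have e2 : (2*(i:ℝ)+1) * ((((j:ℤ)-k) : ℝ) * π / (2*n+1)) = (2*i+1)*xv n j - (2*i+1)*xv n k := by
      unfold xv; push_cast; field_simp; ring
    rw [e1, e2, Real.cos_add, Real.cos_sub]; ring
  rw [Finset.sum_congr rfl (fun i _ => hsplit i), ← Finset.sum_div, Finset.sum_add_distrib]
  by_cases h : j = k
  · subst h
    have h1 : ∑ i ∈ range n, Real.cos ((2*i+1) * (((j+j+1 : ℤ) : ℝ) * π / (2*n+1)))
        = -((-1:ℝ)^((j:ℤ)+j+1)) / 2 :=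
      sumcos_closed n (j+j+1) (sin_ne n (j+j+1) (by omega) (by rw [abs_lt]; omega))
    have hodd : ((-1:ℝ)^((j:ℤ)+j+1)) = -1 := Odd.neg_one_zpow ⟨j, by ring⟩
    have h2 : ∑ i ∈ range n, Real.cos ((2*i+1) * ((((j:ℤ)-j) : ℝ) * π / (2*n+1))) = n := by
      simp
    push_cast at h1 h2 hodd ⊢
    rw [h1, h2, hodd]
    simp; ring
  · have hm1 : ((j:ℤ)+k+1) ≠ 0 := by omega
    have hm1' : |(j:ℤ)+k+1| < 2*n+1 := by rw [abs_lt]; omega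
    have hm2 : ((j:ℤ)-k) ≠ 0 := by omega
    have hm2' : |(j:ℤ)-k| < 2*n+1 := by rw [abs_lt]; omega
    have h1 := sumcos_closed n ((j:ℤ)+k+1) (sin_ne n _ hm1 hm1')
    have h2 := sumcos_closed n ((j:ℤ)-k) (sin_ne n _ hm2 hm2')
    push_cast at h1 h2 ⊢
    rw [h1, h2]
    have hz : ((-1:ℝ))^((j:ℤ)-k) = ((-1:ℝ))^((j:ℤ)+k) := by
      rw [show (j:ℤ)+k = ((j:ℤ)-k) + 2*k by ring,
        zpow_add₀ (by norm_num : (-1:ℝ) ≠ 0),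
        Even.neg_one_zpow (⟨(k:ℤ), by ring⟩ : Even (2*(k:ℤ))), mul_one]
    have hz2 : ((-1:ℝ))^((j:ℤ)+k+1) = -((-1:ℝ))^((j:ℤ)+k) := by
      rw [zpow_add₀ (by norm_num : (-1:ℝ) ≠ 0)]; norm_num
    rw [hz, hz2]
    simp [h]
    ring

lemma charpoly_conj {m : Type*} [Fintype m] [DecidableEq m] (P Q Pi : Matrix m m ℝ)
    (h1 : P * Pi = 1) : (P * Q * Pi).charpoly = Q.charpoly := by
  let f : Matrix m m ℝ →+* Matrix m m ℝ[X] := (C : ℝ →+* ℝ[X]).mapMatrix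
  have hc : Commute (Matrix.scalar m (X : ℝ[X])) (f P) :=
    Matrix.scalar_commute _ (fun r' => Commute.all _ _) _
  have h2 : f P * f Pi = 1 := by rw [← f.map_mul, h1, f.map_one]
  have key : charmatrix (P * Q * Pi) = f P * charmatrix Q * f Pi := by
    unfold charmatrix
    have h4 : (C : ℝ →+* ℝ[X]).mapMatrix (P * Q * Pi) = f P * f Q * f Pi := by
      show f (P * Q * Pi) = _
      rw [f.map_mul, f.map_mul]
    rw [h4]
    have h5 : (Matrix.scalar m (X : ℝ[X])) = Matrix.scalar m (X:ℝ[X]) * (f P * f Pi) := by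
      rw [h2, mul_one]
    calc Matrix.scalar m (X:ℝ[X]) - f P * f Q * f Pi
        = Matrix.scalar m (X:ℝ[X]) * f P * f Pi - f P * f Q * f Pi := by
          conv_lhs => rw [h5]
          rw [← mul_assoc]
      _ = f P * Matrix.scalar m (X:ℝ[X]) * f Pi - f P * f Q * f Pi := by rw [hc.eq]
      _ = f P * (Matrix.scalar m (X:ℝ[X]) - (C : ℝ →+* ℝ[X]).mapMatrix Q) * f Pi := by
          show _ = f P * (Matrix.scalar m (X:ℝ[X]) - f Q) * f Pi
          rw [mul_sub, sub_mul]
  unfold Matrix.charpoly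
  rw [key, det_mul, det_mul, mul_comm, ← mul_assoc]
  have h3 : f Pi * f P = 1 := by rw [← f.map_mul, mul_eq_one_comm.mp h1, f.map_one]
  rw [← det_mul, h3, det_one, one_mul]

lemma charpoly_diag {m : ℕ} (d : Fin m → ℝ) :
    (Matrix.diagonal d).charpoly = ∏ i, (X - C (d i)) := by
  rw [Matrix.charpoly_of_upperTriangular _ (Matrix.blockTriangular_diagonal d)]
  simp

lemma sum_f_eig {m : ℕ} (A : Matrix (Fin m) (Fin m) ℝ) (hA : A.IsHermitian)
    (lam : Fin m → ℝ) (P Pinv : Matrix (Fin m) (Fin m) ℝ) (hP : P * Pinv = 1)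
    (hAP : A = P * Matrix.diagonal lam * Pinv) (g : ℝ → ℝ) :
    ∑ i, g (hA.eigenvalues i) = ∑ i, g (lam i) := by
  have h1 : A.charpoly = ∏ i, (X - C (lam i)) := by
    rw [hAP, charpoly_conj _ _ _ hP, charpoly_diag]
  have hU1 : (hA.eigenvectorUnitary : Matrix (Fin m) (Fin m) ℝ) *
      star (hA.eigenvectorUnitary : Matrix (Fin m) (Fin m) ℝ) = 1 :=
    Matrix.mem_unitaryGroup_iff.mp (hA.eigenvectorUnitary).2
  have h2 : A.charpoly = ∏ i, (X - C (hA.eigenvalues i)) := by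
    have h0 := congrArg Matrix.charpoly hA.spectral_theorem
    rw [Unitary.conjStarAlgAut_apply] at h0
    rw [h0, charpoly_conj _ _ _ hU1]
    have hd : Matrix.diagonal (RCLike.ofReal ∘ hA.eigenvalues) = Matrix.diagonal hA.eigenvalues := by
      simp
    rw [hd, charpoly_diag]
  have h3 : (∏ i, (X - C (hA.eigenvalues i))) = ∏ i, (X - C (lam i)) := by rw [← h1, ← h2]
  have hmul : ∀ (f : Fin m → ℝ),
      (∏ i, (X - C (f i))) = ((Finset.univ.val.map f).map (fun a => X - C a)).prod := by
    intro f
    rw [Multiset.map_map]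
    rfl
  rw [hmul, hmul] at h3
  have h4 : Finset.univ.val.map hA.eigenvalues = Finset.univ.val.map lam := by
    have := congrArg Polynomial.roots h3
    rwa [Polynomial.roots_multiset_prod_X_sub_C, Polynomial.roots_multiset_prod_X_sub_C] at this
  have hsum : ∀ (f : Fin m → ℝ), (∑ i, g (f i)) = ((Finset.univ.val.map f).map g).sum := by
    intro f
    rw [Multiset.map_map]
    rfl
  rw [hsum, hsum, h4]

def LL (n : ℕ) : Matrix (Fin n) (Fin n) ℝ :=
  Matrix.of fun i k => (if (i:ℕ) = k then 1 else 0) - (if (k:ℕ)+1 = i then 1 else 0)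

lemma sum_delta {n : ℕ} (m : ℕ) (f : Fin n → ℝ) :
    (∑ k : Fin n, if (k : ℕ) = m then f k else 0) = if h : m < n then f ⟨m, h⟩ else 0 := by
  split
  · next h =>
    rw [Finset.sum_eq_single (⟨m, h⟩ : Fin n)]
    · simp
    · intro b _ hb
      rw [if_neg]
      intro hc; exact hb (Fin.ext hc)
    · intro hc; exact absurd (Finset.mem_univ _) hc
  · next h =>
    apply Finset.sum_eq_zero
    intro k _
    rw [if_neg]
    intro hc
    exact h (hc ▸ k.2)

lemma sum_shift {n : ℕ} (m : ℕ) (f : Fin n → ℝ) :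
    (∑ k : Fin n, if (k:ℕ)+1 = m then f k else 0)
      = if h : 1 ≤ m ∧ m-1 < n then f ⟨m-1, h.2⟩ else 0 := by
  have h0 : ∀ k : Fin n, (if (k:ℕ)+1 = m then f k else 0)
      = if 1 ≤ m then (if (k:ℕ) = m-1 then f k else 0) else 0 := by
    intro k
    split_ifs <;> first | rfl | omega
  rw [Finset.sum_congr rfl (fun k _ => h0 k)]
  by_cases hm : 1 ≤ m
  · simp only [if_pos hm]
    rw [sum_delta (m-1) f]
    split <;> split <;> first | rfl | omega
  · simp only [if_neg hm, Finset.sum_const_zero]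
    rw [dif_neg]
    omega

lemma TL_eq_one (n : ℕ) : T n * LL n = 1 := by
  ext i j
  rw [Matrix.mul_apply]
  have h0 : ∀ k : Fin n, T n i k * LL n k j
      = (if (k:ℕ) = (j:ℕ) then (if (k:ℕ) ≤ (i:ℕ) then (1:ℝ) else 0) else 0)
        - (if (k:ℕ) = (j:ℕ)+1 then (if (k:ℕ) ≤ (i:ℕ) then (1:ℝ) else 0) else 0) := by
    intro k
    show (if (k:ℕ) ≤ (i:ℕ) then (1:ℝ) else 0) *
      ((if (k:ℕ) = (j:ℕ) then (1:ℝ) else 0) - (if (j:ℕ)+1 = (k:ℕ) then 1 else 0)) = _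
    split_ifs <;> first | omega | norm_num | (exfalso; omega)
  rw [Finset.sum_congr rfl (fun k _ => h0 k), Finset.sum_sub_distrib, sum_delta, sum_delta,
    dif_pos j.2]
  have hj := j.2; have hi := i.2
  simp only [Matrix.one_apply, Fin.ext_iff, Fin.val_mk]
  split_ifs <;> first | omega | norm_num | (exfalso; omega)

noncomputable def MM (n : ℕ) : Matrix (Fin n) (Fin n) ℝ :=
  Matrix.of fun i j => Real.cos ((2*(i:ℕ)+1) * xv n j)

noncomputable def dd (n : ℕ) (j : Fin n) : ℝ := 2 - 2 * Real.cos (2 * xv n j)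

lemma trig3 (x u : ℝ) : 2*Real.cos ((u+2)*x) - Real.cos (u*x) - Real.cos ((u+4)*x)
    = (2-2*Real.cos (2*x))*Real.cos ((u+2)*x) := by
  rw [show u*x = (u+2)*x - 2*x by ring, show (u+4)*x = (u+2)*x + 2*x by ring,
    Real.cos_add, Real.cos_sub]
  ring

lemma trig_base (x : ℝ) : Real.cos x - Real.cos (3*x) = (2 - 2*Real.cos (2*x)) * Real.cos x := by
  rw [show (3:ℝ)*x = 2*x + x by ring, show (2:ℝ)*x = x + x by ring, Real.cos_add, Real.sin_add,
    Real.cos_add]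
  linear_combination (Real.cos x) * Real.sin_sq_add_cos_sq x

lemma gn0 (n j : ℕ) (hj : j < n) : Real.cos ((2*(n:ℝ)+1) * xv n j) = 0 := by
  have h : (2*(n:ℝ)+1) * xv n j = j * Real.pi + Real.pi/2 := by
    unfold xv
    have : (2*(n:ℝ)+1) ≠ 0 := by positivity
    field_simp
  rw [h, Real.cos_add, Real.cos_pi_div_two, Real.sin_pi_div_two]
  have : Real.sin (j * Real.pi) = 0 := by
    exact_mod_cast Real.sin_int_mul_pi (j : ℤ)
  rw [this]
  ring

lemma Lt_mul_apply (n : ℕ) (i j : Fin n) : ((LL n)ᵀ * MM n) i j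
    = MM n i j - (if h : (i:ℕ)+1 < n then MM n ⟨(i:ℕ)+1, h⟩ j else 0) := by
  rw [Matrix.mul_apply]
  have h0 : ∀ k : Fin n, (LL n)ᵀ i k * MM n k j
      = (if (k:ℕ) = (i:ℕ) then MM n k j else 0)
        - (if (k:ℕ) = (i:ℕ)+1 then MM n k j else 0) := by
    intro k
    show ((if (k:ℕ) = (i:ℕ) then (1:ℝ) else 0) - (if (i:ℕ)+1 = (k:ℕ) then 1 else 0)) * MM n k j
      = _
    split_ifs <;> first | omega | ring | (exfalso; omega)
  rw [Finset.sum_congr rfl (fun k _ => h0 k), Finset.sum_sub_distrib, sum_delta, sum_delta,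
    dif_pos i.2]

lemma L_mul_apply (n : ℕ) (N : Matrix (Fin n) (Fin n) ℝ) (i j : Fin n) : (LL n * N) i j
    = N i j - (if h : 1 ≤ (i:ℕ) ∧ (i:ℕ)-1 < n then N ⟨(i:ℕ)-1, h.2⟩ j else 0) := by
  rw [Matrix.mul_apply]
  have h0 : ∀ k : Fin n, LL n i k * N k j
      = (if (k:ℕ) = (i:ℕ) then N k j else 0)
        - (if (k:ℕ)+1 = (i:ℕ) then N k j else 0) := by
    intro k
    show ((if (i:ℕ) = (k:ℕ) then (1:ℝ) else 0) - (if (k:ℕ)+1 = (i:ℕ) then 1 else 0)) * N k j = _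
    split_ifs <;> first | omega | ring | (exfalso; omega)
  rw [Finset.sum_congr rfl (fun k _ => h0 k), Finset.sum_sub_distrib, sum_delta,
    sum_shift (i:ℕ), dif_pos i.2]

lemma BM_eq_MD (n : ℕ) : (LL n * (LL n)ᵀ) * MM n = MM n * Matrix.diagonal (dd n) := by
  rw [Matrix.mul_assoc]
  ext i j
  simp only [L_mul_apply, Lt_mul_apply, Matrix.mul_diagonal]
  have hMe : ∀ (m : ℕ) (h : m < n), MM n ⟨m, h⟩ j = Real.cos ((2*(m:ℝ)+1) * xv n j) :=
    fun m h => rfl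
  have hMij : MM n i j = Real.cos ((2*((i:ℕ):ℝ)+1) * xv n j) := rfl
  have hdd : dd n j = 2 - 2 * Real.cos (2 * xv n j) := rfl
  set x := xv n (j:ℕ) with hx
  have hi := i.2
  have hj := j.2
  set a := ((i:ℕ):ℝ) with ha
  by_cases h1 : 1 ≤ (i:ℕ)
  · rw [dif_pos (⟨h1, by omega⟩ : 1 ≤ (i:ℕ) ∧ (i:ℕ)-1 < n),
      dif_pos (show (i:ℕ)-1+1 < n by omega)]
    have e1 : (2*((((i:ℕ)-1 : ℕ)):ℝ)+1) = 2*a - 1 := by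
      rw [Nat.cast_sub h1]; push_cast; ring
    have e2 : (2*((((i:ℕ)-1+1 : ℕ)):ℝ)+1) = 2*a + 1 := by
      have hq : (i:ℕ)-1+1 = (i:ℕ) := by omega
      rw [hq, ← ha]
    have h := trig3 x (2*a-1)
    rw [show (2*a-1)+2 = 2*a+1 by ring, show (2*a-1)+4 = 2*a+3 by ring] at h
    by_cases h2 : (i:ℕ)+1 < n
    · rw [dif_pos h2]
      have e3 : (2*((((i:ℕ)+1 : ℕ)):ℝ)+1) = 2*a + 3 := by push_cast; ring
      simp only [hMe, hMij, hdd, e1, e2, e3]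
      linarith [h]
    · rw [dif_neg h2]
      have hz := gn0 n j hj
      have hq : (i:ℕ)+1 = n := by omega
      have hq2 : ((n:ℕ):ℝ) = ((i:ℕ):ℝ) + 1 := by exact_mod_cast hq.symm
      rw [show (2*(n:ℝ)+1) = 2*a+3 by rw [ha, hq2]; ring] at hz
      simp only [hMe, hMij, hdd, e1, e2]
      linarith [h, hz]
  · rw [dif_neg (by omega : ¬(1 ≤ (i:ℕ) ∧ (i:ℕ)-1 < n))]
    have hi0 : (i:ℕ) = 0 := by omega
    have e0 : (2*a+1) = 1 := by rw [ha, hi0]; norm_num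
    have hb := trig_base x
    by_cases h2 : (i:ℕ)+1 < n
    · rw [dif_pos h2]
      have e3 : (2*((((i:ℕ)+1 : ℕ)):ℝ)+1) = 3 := by rw [hi0]; norm_num
      simp only [hMe, hMij, hdd, e0, e3, one_mul]
      simp only [hi0, Nat.cast_zero, mul_zero, zero_add, one_mul]
      linarith [hb]
    · rw [dif_neg h2]
      have hn1 : n = 1 := by omega
      have hz := gn0 n j hj
      rw [show (2*(n:ℝ)+1) = 3 by rw [hn1]; norm_num] at hz
      simp only [hMe, hMij, hdd, e0, one_mul]
      simp only [hi0, Nat.cast_zero, mul_zero, zero_add, one_mul]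
      rw [← hx] at hz
      linarith [hb, hz]

lemma MtM (n : ℕ) : (MM n)ᵀ * MM n = ((2*(n:ℝ)+1)/4) • (1 : Matrix (Fin n) (Fin n) ℝ) := by
  ext j k
  rw [Matrix.mul_apply]
  have h00 : (∑ i : Fin n, (MM n)ᵀ j i * MM n i k)
      = ∑ i : Fin n,
          Real.cos ((2*(i:ℕ)+1) * xv n (j:ℕ)) * Real.cos ((2*(i:ℕ)+1) * xv n (k:ℕ)) := rfl
  have h0 := Fin.sum_univ_eq_sum_range
    (fun m => Real.cos ((2*(m:ℝ)+1) * xv n (j:ℕ)) * Real.cos ((2*(m:ℝ)+1) * xv n (k:ℕ))) n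
  rw [h00, h0, orth n j k j.2 k.2, Matrix.smul_apply, Matrix.one_apply, smul_eq_mul]
  by_cases h : j = k
  · subst h; simp
  · rw [if_neg (fun hc => h (Fin.ext hc)), if_neg h, mul_zero]

noncomputable def lamv (n : ℕ) (j : Fin n) : ℝ := 1/(4 * Real.sin (xv n j)^2)

lemma xv_pos (n j : ℕ) : 0 < xv n j := by
  unfold xv
  have := Real.pi_pos
  positivity

lemma sin_xv_pos (n j : ℕ) (hj : j < n) : 0 < Real.sin (xv n j) := by
  apply Real.sin_pos_of_pos_of_lt_pi (xv_pos n j)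
  unfold xv
  rw [div_lt_iff₀ (by positivity)]
  have := Real.pi_pos
  have hc : (2*(j:ℝ)+1) < 2*(2*(n:ℝ)+1) := by
    have : (j:ℝ) < n := by exact_mod_cast hj
    nlinarith
  nlinarith

lemma dd_lamv (n : ℕ) (j : Fin n) : dd n j * lamv n j = 1 := by
  have hs := sin_xv_pos n j j.2
  unfold dd lamv
  have h2 : 2 - 2*Real.cos (2*xv n (j:ℕ)) = 4 * Real.sin (xv n (j:ℕ))^2 := by
    rw [Real.cos_two_mul]
    nlinarith [Real.sin_sq_add_cos_sq (xv n (j:ℕ))]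
  rw [h2]
  field_simp

lemma MMi (n : ℕ) : MM n * ((4/(2*(n:ℝ)+1)) • (MM n)ᵀ) = 1 := by
  rw [mul_eq_one_comm]
  rw [Matrix.smul_mul, MtM, smul_smul,
    show (4/(2*(n:ℝ)+1)) * ((2*(n:ℝ)+1)/4) = 1 by
      have : (2*(n:ℝ)+1) ≠ 0 := by positivity
      field_simp]
  exact one_smul _ _

lemma A_eigen (n : ℕ) :
    (T n)ᵀ * T n = MM n * Matrix.diagonal (lamv n) * ((4/(2*(n:ℝ)+1)) • (MM n)ᵀ) := by
  have hTL := TL_eq_one n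
  have hLT : LL n * T n = 1 := mul_eq_one_comm.mp hTL
  have hAB : ((T n)ᵀ * T n) * (LL n * (LL n)ᵀ) = 1 := by
    calc ((T n)ᵀ * T n) * (LL n * (LL n)ᵀ)
        = (T n)ᵀ * ((T n * LL n) * (LL n)ᵀ) := by
          simp only [Matrix.mul_assoc]
      _ = (T n)ᵀ * (LL n)ᵀ := by rw [hTL, one_mul]
      _ = (LL n * T n)ᵀ := by rw [Matrix.transpose_mul]
      _ = 1 := by rw [hLT, Matrix.transpose_one]
  have h5 : ((T n)ᵀ * T n) * (MM n * Matrix.diagonal (dd n)) = MM n := by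
    rw [← BM_eq_MD n, ← Matrix.mul_assoc, ← Matrix.mul_assoc]
    rw [Matrix.mul_assoc ((T n)ᵀ * T n) (LL n) ((LL n)ᵀ), hAB, one_mul]
  have hDD : Matrix.diagonal (dd n) * Matrix.diagonal (lamv n) = 1 := by
    rw [Matrix.diagonal_mul_diagonal]
    have h6 : (fun j => dd n j * lamv n j) = fun _ => (1:ℝ) := funext (fun j => dd_lamv n j)
    rw [h6, Matrix.diagonal_one]
  have hAM : ((T n)ᵀ * T n) * MM n = MM n * Matrix.diagonal (lamv n) := by
    calc ((T n)ᵀ * T n) * MM n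
        = ((T n)ᵀ * T n) * MM n * (Matrix.diagonal (dd n) * Matrix.diagonal (lamv n)) := by
          rw [hDD, mul_one]
      _ = (((T n)ᵀ * T n) * (MM n * Matrix.diagonal (dd n))) * Matrix.diagonal (lamv n) := by
          simp only [Matrix.mul_assoc]
      _ = MM n * Matrix.diagonal (lamv n) := by rw [h5]
  calc (T n)ᵀ * T n
      = ((T n)ᵀ * T n) * (MM n * ((4/(2*(n:ℝ)+1)) • (MM n)ᵀ)) := by rw [MMi, mul_one]
    _ = (((T n)ᵀ * T n) * MM n) * ((4/(2*(n:ℝ)+1)) • (MM n)ᵀ) := by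
          simp only [Matrix.mul_assoc]
    _ = MM n * Matrix.diagonal (lamv n) * ((4/(2*(n:ℝ)+1)) • (MM n)ᵀ) := by rw [hAM]

lemma nuclear_eq (n : ℕ) : nuclearNorm (T n) = ∑ j, Real.sqrt (lamv n j) := by
  unfold nuclearNorm
  apply sum_f_eig ((T n)ᵀ * T n) _ (lamv n)
    (MM n) ((4/(2*(n:ℝ)+1)) • (MM n)ᵀ) (MMi n)
  exact A_eigen n

lemma sqrt_lamv (n : ℕ) (j : Fin n) : Real.sqrt (lamv n j) = 1/(2*Real.sin (xv n j)) := by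
  have hs := sin_xv_pos n j j.2
  rw [show lamv n j = (1/(2*Real.sin (xv n (j:ℕ))))^2 by
    unfold lamv; rw [div_pow]; norm_num; ring]
  exact Real.sqrt_sq (by positivity)

lemma sqrt_lamv_ge (n : ℕ) (j : Fin n) :
    (2*(n:ℝ)+1) / ((2*(j:ℕ)+1) * Real.pi) ≤ Real.sqrt (lamv n j) := by
  rw [sqrt_lamv]
  have hs := sin_xv_pos n j j.2
  have hx := xv_pos n (j:ℕ)
  have hsle : Real.sin (xv n j) ≤ xv n j := Real.sin_le hx.le
  have hπ := Real.pi_pos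
  rw [div_le_div_iff₀ (by positivity) (by positivity)]
  have hkey : 2 * xv n (j:ℕ) * (2*(n:ℝ)+1) = (2*(j:ℕ)+1)*Real.pi := by
    unfold xv
    have : (2*(n:ℝ)+1) ≠ 0 := by positivity
    field_simp
  nlinarith [hsle]

lemma nuclear_ge (n : ℕ) :
    ((2*(n:ℝ)+1)/Real.pi) * ∑ j ∈ Finset.range n, 1/(2*(j:ℝ)+1) ≤ nuclearNorm (T n) := by
  rw [nuclear_eq]
  have hπ := Real.pi_pos
  calc ((2*(n:ℝ)+1)/Real.pi) * ∑ j ∈ Finset.range n, 1/(2*(j:ℝ)+1)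
      = ∑ j ∈ Finset.range n, (2*(n:ℝ)+1)/((2*(j:ℝ)+1)*Real.pi) := by
        rw [Finset.mul_sum]
        apply Finset.sum_congr rfl
        intro j _
        rw [mul_one_div, div_div, mul_comm Real.pi (2*(j:ℝ)+1)]
    _ = ∑ j : Fin n, (2*(n:ℝ)+1)/((2*((j:ℕ):ℝ)+1)*Real.pi) := by
        exact (Fin.sum_univ_eq_sum_range (fun j => (2*(n:ℝ)+1)/((2*(j:ℝ)+1)*Real.pi)) n).symm
    _ ≤ ∑ j, Real.sqrt (lamv n j) := Finset.sum_le_sum (fun j _ => sqrt_lamv_ge n j)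

end Aux

/-- `(1/n)‖Tₙ‖_* = Ω(log n)`; in particular
`(1/n)‖Tₙ‖_* ≥ ((2n+1)/(πn))·Σ_{j=1}^n 1/(2j−1)`. -/
theorem nuclear_T_lower_bound :
    (∃ c : ℝ, 0 < c ∧ ∀ n : ℕ, 2 ≤ n →
      c * Real.log n ≤ (1 / (n : ℝ)) * nuclearNorm (T n)) ∧
    ∀ n : ℕ, 1 ≤ n →
      ((2 * (n : ℝ) + 1) / (Real.pi * n)) * ∑ j ∈ Finset.range n, 1 / (2 * (j : ℝ) + 1)
        ≤ (1 / (n : ℝ)) * nuclearNorm (T n) := by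
  have hπ := Real.pi_pos
  have main : ∀ n : ℕ, 1 ≤ n →
      ((2 * (n : ℝ) + 1) / (Real.pi * n)) * ∑ j ∈ Finset.range n, 1 / (2 * (j : ℝ) + 1)
        ≤ (1 / (n : ℝ)) * nuclearNorm (T n) := by
    intro n hn
    have hn0 : (0:ℝ) < n := by exact_mod_cast hn
    have h := nuclear_ge n
    have heq : ((2 * (n : ℝ) + 1) / (Real.pi * n)) * ∑ j ∈ Finset.range n, 1 / (2 * (j : ℝ) + 1)
        = (1/(n:ℝ)) * (((2*(n:ℝ)+1)/Real.pi) * ∑ j ∈ Finset.range n, 1/(2*(j:ℝ)+1)) := by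
      ring
    rw [heq]
    exact mul_le_mul_of_nonneg_left h (by positivity)
  refine ⟨⟨1/Real.pi, by positivity, ?_⟩, main⟩
  intro n hn
  have hn0 : (0:ℝ) < n := by
    have : 0 < n := by omega
    exact_mod_cast this
  have hS : Real.log (2*((n:ℕ):ℝ)+1) ≤ ∑ j ∈ Finset.range n, 2/(2*(j:ℝ)+1) := by
    have tele := Finset.sum_range_sub (fun j : ℕ => Real.log (2*(j:ℝ)+1)) n
    have h0 : Real.log (2*((0:ℕ):ℝ)+1) = 0 := by norm_num
    have hle : ∀ j ∈ Finset.range n,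
        Real.log (2*((j+1:ℕ):ℝ)+1) - Real.log (2*(j:ℝ)+1) ≤ 2/(2*(j:ℝ)+1) := by
      intro j _
      have hj1 : (0:ℝ) < 2*(j:ℝ)+1 := by positivity
      have hj3 : (0:ℝ) < 2*((j+1:ℕ):ℝ)+1 := by positivity
      rw [← Real.log_div (by positivity) (by positivity)]
      have hlog := Real.log_le_sub_one_of_pos
        (show (0:ℝ) < (2*((j+1:ℕ):ℝ)+1)/(2*(j:ℝ)+1) by positivity)
      have he : (2*((j+1:ℕ):ℝ)+1)/(2*(j:ℝ)+1) - 1 = 2/(2*(j:ℝ)+1) := by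
        push_cast
        field_simp
        ring
      linarith [hlog]
    have hsum := Finset.sum_le_sum hle
    rw [tele, h0, sub_zero] at hsum
    exact hsum
  have hSfin : (0:ℝ) ≤ ∑ j ∈ Finset.range n, 1/(2*(j:ℝ)+1) :=
    Finset.sum_nonneg (fun j _ => by positivity)
  have hdouble : ∑ j ∈ Finset.range n, 2/(2*(j:ℝ)+1)
      = 2 * ∑ j ∈ Finset.range n, 1/(2*(j:ℝ)+1) := by
    rw [Finset.mul_sum]
    apply Finset.sum_congr rfl
    intro j _
    rw [mul_one_div]
  have hmono : Real.log (n:ℝ) ≤ Real.log (2*((n:ℕ):ℝ)+1) :=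
    Real.log_le_log hn0 (by linarith)
  have hcoef : 2/Real.pi ≤ (2*(n:ℝ)+1)/(Real.pi*(n:ℝ)) := by
    rw [div_le_div_iff₀ (by positivity) (by positivity)]
    nlinarith
  have step1 : (1/Real.pi) * Real.log (n:ℝ) ≤ (2/Real.pi) * ∑ j ∈ Finset.range n, 1/(2*(j:ℝ)+1) := by
    have : Real.log (n:ℝ) ≤ 2 * ∑ j ∈ Finset.range n, 1/(2*(j:ℝ)+1) := by
      rw [← hdouble]
      linarith [hS, hmono]
    calc (1/Real.pi) * Real.log (n:ℝ)
        ≤ (1/Real.pi) * (2 * ∑ j ∈ Finset.range n, 1/(2*(j:ℝ)+1)) :=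
          mul_le_mul_of_nonneg_left this (by positivity)
      _ = (2/Real.pi) * ∑ j ∈ Finset.range n, 1/(2*(j:ℝ)+1) := by ring
  have step2 : (2/Real.pi) * (∑ j ∈ Finset.range n, 1/(2*(j:ℝ)+1))
      ≤ ((2*(n:ℝ)+1)/(Real.pi*(n:ℝ))) * ∑ j ∈ Finset.range n, 1/(2*(j:ℝ)+1) :=
    mul_le_mul_of_nonneg_right hcoef hSfin
  have step3 := main n (by omega)
  linarith [step1, step2, step3]
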